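/- Let m ≥ 2 and let f be any complex-valued class function on the dihedral group W = I_2(m). Define R(f)(q) = ((q−1)^2 P_W(q)/(2m)) Σ_{w∈W} det(w) f(w)/det(q·id − w) as a rational function of q, where P_W(q) = (q^2−1)(q^m−1)/(q−1)^2. Then q^m · R(f)(q^{−1}) = R(ε·f)(q), where ε is the sign character (ε(w) = det(w)) and m is the number of reflections in W. -/

import Mathlib

open Complex Finset

/-- The fake degree `R(f)(q)` of a function `f` on the dihedral group of order `2m`,
acting on `ℂ²` with the rotations `r k` having eigenvalues `ζ^k, ζ^{-k}` and determinant `1`,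
and the reflections `sr k` having characteristic polynomial `q² - 1` and determinant `-1`.
Here `(q-1)² P_W(q) = (q²-1)(q^m-1)`. -/
noncomputable def fakeDeg (m : ℕ) (ζ : ℂ) (f : DihedralGroup m → ℂ) (q : ℂ) : ℂ :=
  ((q ^ 2 - 1) * (q ^ m - 1) / (2 * m)) *
    ((∑ k ∈ Finset.range m,
        f (DihedralGroup.r (k : ZMod m)) / ((q - ζ ^ k) * (q - ζ ^ (-(k : ℤ))))) +
      ∑ k ∈ Finset.range m, (-1) * f (DihedralGroup.sr (k : ZMod m)) / (q ^ 2 - 1))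

/-- The sign character of the dihedral group: `det` of the reflection representation. -/
def dihSign {m : ℕ} : DihedralGroup m → ℂ
  | DihedralGroup.r _ => 1
  | DihedralGroup.sr _ => -1


private lemma aux1 (qm q2 c X D F : ℂ) (hD : D ≠ 0) (hc : c ≠ 0) (h2 : q2 ≠ 0)
    (hm : qm ≠ 0) :
    qm * (X / (q2 * qm) / c * (F * q2 / D)) = X / c * (F / D) := by
  field_simp

private lemma aux2 (qm q2 c A B F : ℂ) (hA : A ≠ 0) (hc : c ≠ 0) (h2 : q2 ≠ 0)
    (hm : qm ≠ 0) :
    qm * (-A / q2 * (-B / qm) / c * (-1 * F / (-A / q2))) =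
      A * B / c * (-1 * (-1 * F) / A) := by
  rw [div_div_eq_mul_div]
  field_simp

/-- `q^{N*} R(f)(q⁻¹) = R(ε ⊗ f)(q)` for the dihedral group, where `N* = m` is the
number of reflections. -/
theorem fake_degree_symmetry (m : ℕ) (hm : 2 ≤ m)
    (ζ : ℂ) (hζ : ζ = Complex.exp (2 * Real.pi * Complex.I / m))
    (f : DihedralGroup m → ℂ) (hf : ∀ w v : DihedralGroup m, f (v * w * v⁻¹) = f w)
    (q : ℂ) (hq0 : q ≠ 0) (hqm : q ^ m ≠ 1) (hq2 : q ^ 2 ≠ 1) :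
    q ^ m * fakeDeg m ζ f q⁻¹ = fakeDeg m ζ (fun w => dihSign w * f w) q := by
  have hm0 : (m : ℂ) ≠ 0 := Nat.cast_ne_zero.mpr (by omega)
  have hζ0 : ζ ≠ 0 := by rw [hζ]; exact Complex.exp_ne_zero _
  have hζm : ζ ^ m = 1 := by
    rw [hζ, ← Complex.exp_nat_mul,
      show (m : ℂ) * (2 * Real.pi * Complex.I / m) = 2 * Real.pi * Complex.I by
        field_simp]
    exact Complex.exp_two_pi_mul_I
  have key : ∀ k : ℕ, ζ ^ (-(k : ℤ)) = (ζ ^ k)⁻¹ := fun k => by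
    rw [zpow_neg, zpow_natCast]
  have h1 : ∀ k : ℕ, q - ζ ^ k ≠ 0 := by
    intro k h
    apply hqm
    rw [sub_eq_zero.mp h, ← pow_mul, mul_comm, pow_mul, hζm, one_pow]
  have h2 : ∀ k : ℕ, q - (ζ ^ k)⁻¹ ≠ 0 := by
    intro k h
    apply hqm
    rw [sub_eq_zero.mp h, inv_pow, ← pow_mul, mul_comm, pow_mul, hζm, one_pow, inv_one]
  rw [fakeDeg, fakeDeg]
  simp only [dihSign]
  rw [mul_add, mul_add, mul_add, Finset.mul_sum, Finset.mul_sum, Finset.mul_sum, Finset.mul_sum, Finset.mul_sum, Finset.mul_sum]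
  congr 1
  · refine Finset.sum_congr rfl fun k _ => ?_
    rw [key k, one_mul]
    have hk0 : ζ ^ k ≠ 0 := pow_ne_zero _ hζ0
    have hD : (q - ζ ^ k) * (q - (ζ ^ k)⁻¹) ≠ 0 := mul_ne_zero (h1 k) (h2 k)
    have hd : (q⁻¹ - ζ ^ k) * (q⁻¹ - (ζ ^ k)⁻¹) = (q - ζ ^ k) * (q - (ζ ^ k)⁻¹) / q ^ 2 := by
      field_simp
      ring
    have hC : (q⁻¹ ^ 2 - 1) * (q⁻¹ ^ m - 1) = (q ^ 2 - 1) * (q ^ m - 1) / (q ^ 2 * q ^ m) := by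
      rw [inv_pow, inv_pow]
      field_simp
      ring
    rw [hd, hC, div_div_eq_mul_div]
    exact aux1 _ _ _ _ _ _ hD (by norm_num [hm0]) (pow_ne_zero _ hq0) (pow_ne_zero _ hq0)
  · refine Finset.sum_congr rfl fun k _ => ?_
    have h2q : q ^ 2 - 1 ≠ 0 := sub_ne_zero.mpr hq2
    have hd : q⁻¹ ^ 2 - 1 = -(q ^ 2 - 1) / q ^ 2 := by
      rw [inv_pow]
      field_simp
      ring
    have hC : q⁻¹ ^ m - 1 = -(q ^ m - 1) / q ^ m := by
      rw [inv_pow]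
      field_simp
      ring
    rw [hd, hC]
    exact aux2 _ _ _ _ _ _ h2q (by norm_num [hm0]) (pow_ne_zero _ hq0) (pow_ne_zero _ hq0)
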